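/- arXiv:1610.08696 — 2 statements merged into one kernel-verified Lean document; each statement's English description precedes it below -/
import Mathlib

section
/- Let D and D̃ be dictionaries with ‖D − D̃‖_{1,2} ≤ λ, and let ã* be a minimizer of the LASSO objective for D̃ at x. Then | ‖D ã*‖_2² − ‖D̃ ã*‖_2² | ≤ ( (3/4)‖x‖_2 + 2 ) ‖x‖_2³ · ‖D − D̃‖_{1,2} / λ. -/
open Finset Matrix

noncomputable def norm2 {ι : Type*} [Fintype ι] (v : ι → ℝ) : ℝ :=
  Real.sqrt (∑ i, v i ^ 2)

noncomputable def norm1 {ι : Type*} [Fintype ι] (v : ι → ℝ) : ℝ :=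
  ∑ i, |v i|

noncomputable def norm0 {ι : Type*} (v : ι → ℝ) : ℕ :=
  Set.ncard {i | v i ≠ 0}

noncomputable def dot {ι : Type*} [Fintype ι] (u v : ι → ℝ) : ℝ :=
  ∑ i, u i * v i

def col {d m : ℕ} (D : Matrix (Fin d) (Fin m) ℝ) (i : Fin m) : Fin d → ℝ :=
  fun r => D r i

def IsDictionary {d m : ℕ} (D : Matrix (Fin d) (Fin m) ℝ) : Prop :=
  ∀ i, norm2 (_root_.col D i) = 1

noncomputable def norm12 {d m : ℕ} (E : Matrix (Fin d) (Fin m) ℝ) : ℝ :=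
  ⨆ i : Fin m, norm2 (_root_.col E i)

noncomputable def lassoObj {d m : ℕ} (lam : ℝ) (D : Matrix (Fin d) (Fin m) ℝ)
    (x : Fin d → ℝ) (z : Fin m → ℝ) : ℝ :=
  (1/2) * (norm2 (x - D.mulVec z))^2 + lam * norm1 z

def IsLassoMin {d m : ℕ} (lam : ℝ) (D : Matrix (Fin d) (Fin m) ℝ)
    (x : Fin d → ℝ) (a : Fin m → ℝ) : Prop :=
  ∀ z, lassoObj lam D x a ≤ lassoObj lam D x z

def Incoherent {d m : ℕ} (mu : ℝ) (D : Matrix (Fin d) (Fin m) ℝ) : Prop :=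
  ∀ i j, i ≠ j → |dot (_root_.col D i) (_root_.col D j)| ≤ mu / Real.sqrt d

noncomputable def kMargin {d m : ℕ} (lam : ℝ) (k : ℕ) (D : Matrix (Fin d) (Fin m) ℝ)
    (x : Fin d → ℝ) (a : Fin m → ℝ) : ℝ :=
  ⨆ I : {I : Finset (Fin m) // I.card = m - k},
    ⨅ j : {j : Fin m // j ∈ I.1}, (lam - |dot (_root_.col D j.1) (x - D.mulVec a)|)

lemma norm2_eq_norm {ι : Type*} [Fintype ι] (v : ι → ℝ) :
    norm2 v = ‖(WithLp.equiv 2 (ι → ℝ)).symm v‖ := by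
  rw [EuclideanSpace.norm_eq]
  simp [norm2, Real.norm_eq_abs, sq_abs]

lemma norm2_nonneg' {ι : Type*} [Fintype ι] (v : ι → ℝ) : 0 ≤ norm2 v :=
  Real.sqrt_nonneg _

lemma sq_norm2 {ι : Type*} [Fintype ι] (v : ι → ℝ) : (norm2 v)^2 = ∑ i, v i ^ 2 :=
  Real.sq_sqrt (by positivity)

lemma norm2_add_le {ι : Type*} [Fintype ι] (u v : ι → ℝ) :
    norm2 (u + v) ≤ norm2 u + norm2 v := by
  simp only [norm2_eq_norm]; exact norm_add_le _ _

lemma norm2_neg {ι : Type*} [Fintype ι] (v : ι → ℝ) : norm2 (-v) = norm2 v := by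
  simp [norm2]

lemma abs_dot_le {ι : Type*} [Fintype ι] (u v : ι → ℝ) :
    |∑ i, u i * v i| ≤ norm2 u * norm2 v := by
  simp only [norm2_eq_norm]
  have := abs_real_inner_le_norm ((WithLp.equiv 2 (ι → ℝ)).symm u)
    ((WithLp.equiv 2 (ι → ℝ)).symm v)
  simpa [PiLp.inner_apply, RCLike.inner_apply, mul_comm] using this

lemma norm2_mulVec_le {d m : ℕ} (E : Matrix (Fin d) (Fin m) ℝ) (a : Fin m → ℝ) :
    norm2 (E.mulVec a) ≤ ∑ i, |a i| * norm2 (_root_.col E i) := by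
  have h : E.mulVec a = ∑ i, a i • _root_.col E i := by
    funext r
    simp only [Matrix.mulVec, dotProduct, Finset.sum_apply, Pi.smul_apply,
      _root_.col, smul_eq_mul]
    exact Finset.sum_congr rfl fun i _ => mul_comm _ _
  rw [h, norm2_eq_norm]
  have h2 : (WithLp.equiv 2 (Fin d → ℝ)).symm (∑ i, a i • _root_.col E i)
      = ∑ i, (WithLp.equiv 2 (Fin d → ℝ)).symm (a i • _root_.col E i) :=
    WithLp.toLp_sum 2 _ _ _
  rw [h2]
  refine (norm_sum_le _ _).trans (Finset.sum_le_sum fun i _ => ?_)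
  rw [norm2_eq_norm]
  have h3 : (WithLp.equiv 2 (Fin d → ℝ)).symm (a i • _root_.col E i)
      = a i • (WithLp.equiv 2 (Fin d → ℝ)).symm (_root_.col E i) := rfl
  rw [h3, norm_smul]
  simp [Real.norm_eq_abs]

set_option maxHeartbeats 1000000 in
theorem reconstructor_cross_norm_stability {d m : ℕ} (lam : ℝ) (hlam : 0 < lam)
    (D Dt : Matrix (Fin d) (Fin m) ℝ) (hD : IsDictionary D) (hDt : IsDictionary Dt)
    (hclose : norm12 (D - Dt) ≤ lam) (x : Fin d → ℝ)
    (at' : Fin m → ℝ) (hat : IsLassoMin lam Dt x at') :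
    |(norm2 (D.mulVec at'))^2 - (norm2 (Dt.mulVec at'))^2|
      ≤ ((3/4) * norm2 x + 2) * (norm2 x)^3 * norm12 (D - Dt) / lam := by
  set X := norm2 x with hX
  set n := norm12 (D - Dt) with hn
  set A1 := norm1 at' with hA1
  set u := D.mulVec at' with hu
  set v := Dt.mulVec at' with hv
  have hX0 : 0 ≤ X := norm2_nonneg' x
  have hEcol : ∀ i, norm2 (_root_.col (D - Dt) i) ≤ n := fun i =>
    le_ciSup (f := fun i => norm2 (_root_.col (D - Dt) i))
      (Set.Finite.bddAbove (Set.finite_range _)) i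
  have hn0 : 0 ≤ n := by
    rcases isEmpty_or_nonempty (Fin m) with h | h
    · rw [hn, norm12, Real.iSup_of_isEmpty]
    · exact (norm2_nonneg' _).trans (hEcol h.some)
  have hA10 : 0 ≤ A1 := Finset.sum_nonneg fun i _ => abs_nonneg _
  -- minimality at 0
  have hmin := hat 0
  have hz : lassoObj lam Dt x 0 = (1/2) * X^2 := by
    simp [lassoObj, norm1, hX]
  rw [hz] at hmin
  simp only [lassoObj] at hmin
  rw [← hv, ← hA1] at hmin
  have hR0 : 0 ≤ norm2 (x - v) := norm2_nonneg' _
  have hRsq : (norm2 (x - v))^2 ≤ X^2 := by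
    have : 0 ≤ lam * A1 := mul_nonneg hlam.le hA10
    nlinarith
  have hR : norm2 (x - v) ≤ X := by nlinarith
  have hlamA1 : lam * A1 ≤ X^2 / 2 := by
    have : 0 ≤ (norm2 (x - v))^2 := sq_nonneg _
    nlinarith
  -- ‖v‖ ≤ 2X
  have hv0 : 0 ≤ norm2 v := norm2_nonneg' _
  have hvle : norm2 v ≤ 2 * X := by
    have h1 : v = x + -(x - v) := by abel
    calc norm2 v ≤ norm2 x + norm2 (-(x - v)) := by
          rw (occs := .pos [1]) [h1]; exact norm2_add_le _ _
      _ = X + norm2 (x - v) := by rw [norm2_neg, ← hX]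
      _ ≤ 2 * X := by linarith
  -- ‖E at'‖ ≤ A1 * n
  have hE : norm2 ((D - Dt).mulVec at') ≤ A1 * n := by
    calc norm2 ((D - Dt).mulVec at') ≤ ∑ i, |at' i| * norm2 (_root_.col (D - Dt) i) :=
          norm2_mulVec_le _ _
      _ ≤ ∑ i, |at' i| * n := Finset.sum_le_sum fun i _ =>
          mul_le_mul_of_nonneg_left (hEcol i) (abs_nonneg _)
      _ = A1 * n := by rw [hA1, norm1, ← Finset.sum_mul]
  have hE0 : 0 ≤ norm2 ((D - Dt).mulVec at') := norm2_nonneg' _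
  have hsub : (D - Dt).mulVec at' = u - v := by rw [hu, hv]; exact Matrix.sub_mulVec _ _ _
  have hu0 : 0 ≤ norm2 u := norm2_nonneg' _
  have hule : norm2 u ≤ norm2 v + A1 * n := by
    have h1 : u = v + (u - v) := by abel
    calc norm2 u ≤ norm2 v + norm2 (u - v) := by
          rw (occs := .pos [1]) [h1]; exact norm2_add_le _ _
      _ ≤ norm2 v + A1 * n := by rw [← hsub]; linarith
  -- key identity and Cauchy-Schwarz
  have hkey : |(norm2 u)^2 - (norm2 v)^2|
      ≤ norm2 ((D - Dt).mulVec at') * (norm2 u + norm2 v) := by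
    have hid : (norm2 u)^2 - (norm2 v)^2 = ∑ i, ((D - Dt).mulVec at') i * (u + v) i := by
      rw [sq_norm2, sq_norm2, ← Finset.sum_sub_distrib, hsub]
      exact Finset.sum_congr rfl fun i _ => by
        simp only [Pi.sub_apply, Pi.add_apply]; ring
    rw [hid]
    refine (abs_dot_le _ _).trans ?_
    have h2 := norm2_add_le u v
    nlinarith
  rw [le_div_iff₀ hlam]
  have hS : norm2 u + norm2 v ≤ 4*X + X^2/2 := by
    have hA1n : A1 * n ≤ X^2 / 2 := by nlinarith
    linarith
  have hS0 : 0 ≤ norm2 u + norm2 v := by linarith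
  have hAn0 : 0 ≤ A1 * n := mul_nonneg hA10 hn0
  have c1 : norm2 ((D - Dt).mulVec at') * (norm2 u + norm2 v) ≤ (A1*n) * (4*X + X^2/2) :=
    mul_le_mul hE hS hS0 hAn0
  have c2 : norm2 ((D - Dt).mulVec at') * (norm2 u + norm2 v) * lam
      ≤ (A1*n) * (4*X + X^2/2) * lam :=
    mul_le_mul_of_nonneg_right c1 hlam.le
  have h4X0 : 0 ≤ (4*X + X^2/2) * n := mul_nonneg (by nlinarith) hn0
  have c3 : (lam*A1) * ((4*X + X^2/2) * n) ≤ (X^2/2) * ((4*X + X^2/2)*n) :=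
    mul_le_mul_of_nonneg_right hlamA1 h4X0
  have hx4n : 0 ≤ X^4 * n := mul_nonneg (by positivity) hn0
  calc |(norm2 u)^2 - (norm2 v)^2| * lam
      ≤ norm2 ((D - Dt).mulVec at') * (norm2 u + norm2 v) * lam :=
        mul_le_mul_of_nonneg_right hkey hlam.le
    _ ≤ ((3/4) * X + 2) * X^3 * n := by nlinarith
end

section
/- (Preservation of sparsity.) Let D and D̃ be dictionaries with ‖D − D̃‖_{1,2} ≤ λ, and suppose M_k(D, x) > (1 + ‖x‖_2/λ) ‖x‖_2 ‖D − D̃‖_{1,2} + √( 2 (3‖x‖_2² + 9‖x‖_2 + 2) ‖x‖_2² ‖D − D̃‖_{1,2} / λ ). Then for any minimizers φ_D(x) and φ_{D̃}(x) of the respective LASSO objectives, the difference is k-sparse: ‖φ_D(x) − φ_{D̃}(x)‖_0 ≤ k. -/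
open Finset Matrix

noncomputable def toE {d : ℕ} (v : Fin d → ℝ) : EuclideanSpace ℝ (Fin d) :=
  (WithLp.equiv 2 _).symm v

lemma norm2_eq {d : ℕ} (v : Fin d → ℝ) : norm2 v = ‖toE v‖ := by
  rw [EuclideanSpace.norm_eq, norm2]
  congr 1; apply Finset.sum_congr rfl; intro i _
  simp [toE, Real.norm_eq_abs, sq_abs]

lemma dot_eq {d : ℕ} (u v : Fin d → ℝ) : dot u v = inner ℝ (toE u) (toE v) := by
  rw [PiLp.inner_apply]; unfold dot; refine Finset.sum_congr rfl fun i _ => ?_; simp [toE, mul_comm]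

lemma toE_sub {d : ℕ} (u v : Fin d → ℝ) : toE (u - v) = toE u - toE v := rfl
lemma toE_add {d : ℕ} (u v : Fin d → ℝ) : toE (u + v) = toE u + toE v := rfl
lemma toE_smul {d : ℕ} (c : ℝ) (v : Fin d → ℝ) : toE (c • v) = c • toE v := rfl
lemma toE_neg {d : ℕ} (v : Fin d → ℝ) : toE (-v) = - toE v := rfl

lemma toE_mulVec {d m : ℕ} (D : Matrix (Fin d) (Fin m) ℝ) (z : Fin m → ℝ) :
    toE (D.mulVec z) = ∑ i, z i • toE (_root_.col D i) := by
  ext r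
  simp [toE, Matrix.mulVec, dotProduct, _root_.col, mul_comm]

lemma norm2_nonneg {d : ℕ} (v : Fin d → ℝ) : 0 ≤ norm2 v := Real.sqrt_nonneg _

lemma col_le_norm12 {d m : ℕ} (E : Matrix (Fin d) (Fin m) ℝ) (i : Fin m) :
    norm2 (_root_.col E i) ≤ norm12 E := by
  have h : norm12 E = ⨆ j, norm2 (_root_.col E j) := rfl
  rw [h]
  exact le_ciSup (f := fun j => norm2 (_root_.col E j))
    (Set.Finite.bddAbove (Set.finite_range _)) i

lemma norm12_nonneg {d m : ℕ} (E : Matrix (Fin d) (Fin m) ℝ) (hm : 0 < m) :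
    0 ≤ norm12 E :=
  le_trans (norm2_nonneg _) (col_le_norm12 E ⟨0, hm⟩)

lemma mulVec_norm_le {d m : ℕ} (E : Matrix (Fin d) (Fin m) ℝ) (z : Fin m → ℝ) :
    ‖toE (E.mulVec z)‖ ≤ norm12 E * norm1 z := by
  rw [toE_mulVec]
  calc ‖∑ i, z i • toE (_root_.col E i)‖ ≤ ∑ i, ‖z i • toE (_root_.col E i)‖ := norm_sum_le _ _
    _ ≤ ∑ i, |z i| * norm12 E := by
        apply Finset.sum_le_sum; intro i _
        rw [norm_smul, Real.norm_eq_abs, ← norm2_eq]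
        exact mul_le_mul_of_nonneg_left (col_le_norm12 E i) (abs_nonneg _)
    _ = norm12 E * norm1 z := by rw [← Finset.sum_mul, norm1, mul_comm]

lemma norm12_sub_symm {d m : ℕ} (D Dt : Matrix (Fin d) (Fin m) ℝ) :
    norm12 (Dt - D) = norm12 (D - Dt) := by
  unfold norm12
  congr 1; ext i
  have : _root_.col (Dt - D) i = -(_root_.col (D - Dt) i) := by
    ext r; simp [_root_.col]
  rw [this, norm2_eq, norm2_eq, toE_neg, norm_neg]

lemma norm1_nonneg {m : ℕ} (v : Fin m → ℝ) : 0 ≤ norm1 v :=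
  Finset.sum_nonneg fun i _ => abs_nonneg _

lemma lasso_kkt {d m : ℕ} {lam : ℝ} (hlam : 0 < lam) {D : Matrix (Fin d) (Fin m) ℝ}
    (hD : IsDictionary D) {x : Fin d → ℝ} {a : Fin m → ℝ}
    (hmin : IsLassoMin lam D x a) (j : Fin m) :
    |dot (_root_.col D j) (x - D.mulVec a)| ≤ lam ∧
    (a j ≠ 0 → |dot (_root_.col D j) (x - D.mulVec a)| = lam) := by
  set c := dot (_root_.col D j) (x - D.mulVec a) with hc
  have hg : ‖toE (_root_.col D j)‖ = 1 := by rw [← norm2_eq]; exact hD j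
  have key : ∀ t : ℝ, 0 ≤ -(t*c) + t^2/2 + lam*(|a j + t| - |a j|) := by
    intro t
    have h := hmin (a + t • (Pi.single j 1 : Fin m → ℝ))
    have hv : x - D.mulVec (a + t • (Pi.single j 1 : Fin m → ℝ))
        = (x - D.mulVec a) - t • _root_.col D j := by
      rw [Matrix.mulVec_add, Matrix.mulVec_smul, Matrix.mulVec_single_one]
      ext r; simp [_root_.col, Matrix.transpose]; ring
    have hcc : inner ℝ (toE (x - D.mulVec a)) (toE (_root_.col D j)) = c := by
      rw [hc, dot_eq]; exact real_inner_comm _ _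
    have hn : (norm2 (x - D.mulVec (a + t • (Pi.single j 1 : Fin m → ℝ))))^2
        = (norm2 (x - D.mulVec a))^2 - 2*(t*c) + t^2 := by
      rw [hv, norm2_eq, norm2_eq, toE_sub, toE_smul, norm_sub_sq_real,
        real_inner_smul_right, hcc, norm_smul, Real.norm_eq_abs]
      rw [mul_pow, sq_abs, hg]; ring
    have hupd : ∀ i, (a + t • (Pi.single j 1 : Fin m → ℝ)) i = Function.update a j (a j + t) i := by
      intro i; by_cases h : i = j <;> simp [h, Pi.single_apply, Function.update]
    have h1 : norm1 (a + t • (Pi.single j 1 : Fin m → ℝ)) = norm1 a + (|a j + t| - |a j|) := by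
      have e1 : norm1 (a + t • (Pi.single j 1 : Fin m → ℝ))
          = ∑ i ∈ Finset.univ, Function.update (fun i => |a i|) j (|a j + t|) i := by
        apply Finset.sum_congr rfl; intro i _
        by_cases h : i = j <;> simp [hupd i, h, Function.update]
      have e2 := Finset.sum_update_of_mem (Finset.mem_univ j) (fun i => |a i|) (|a j + t|)
      have e3 := Finset.sum_update_of_mem (Finset.mem_univ j) (fun i => |a i|) (|a j|)
      have e4 : norm1 a = ∑ i ∈ Finset.univ, Function.update (fun i => |a i|) j (|a j|) i := by
        apply Finset.sum_congr rfl; intro i _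
        by_cases h : i = j <;> simp [h, Function.update]
      rw [e1, e2]; rw [e4, e3] ; ring
    rw [lassoObj, lassoObj, hn, h1] at h
    nlinarith [h]
  have hle : |c| ≤ lam := by
    by_contra hlt
    push_neg at hlt
    set s := |c| - lam with hs
    have hs0 : 0 < s := by simp [hs]; linarith
    set t := if 0 ≤ c then s else -s with ht
    have h1 : t * c = s * |c| := by
      by_cases h : 0 ≤ c
      · simp [ht, h, abs_of_nonneg h, mul_comm]
      · push_neg at h; simp [ht, not_le.mpr h, abs_of_neg h]; try ring
    have h2 : |t| = s := by
      by_cases h : 0 ≤ c <;> simp [ht, h, abs_of_pos hs0]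
    have h3 : |a j + t| - |a j| ≤ s := by
      have := abs_add_le (a j) t
      rw [h2] at this; linarith
    have hk := key t
    have ht2 : t^2 = s^2 := by rw [← sq_abs, h2]
    nlinarith [hk, mul_le_mul_of_nonneg_left h3 (le_of_lt hlam)]
  refine ⟨hle, ?_⟩
  intro haj
  by_contra hne
  have hlt : |c| < lam := lt_of_le_of_ne hle hne
  set s := min |a j| (lam - |c|) with hs
  have hs0 : 0 < s := lt_min (abs_pos.mpr haj) (by linarith)
  have hsa : s ≤ |a j| := min_le_left _ _
  have hsl : s ≤ lam - |c| := min_le_right _ _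
  set t := if 0 ≤ a j then -s else s with ht
  have habs : |a j + t| = |a j| - s := by
    by_cases h : 0 ≤ a j
    · have h' : 0 < a j := lt_of_le_of_ne h (Ne.symm haj)
      have hsa' : s ≤ a j := by rwa [abs_of_pos h'] at hsa
      rw [ht, if_pos h, abs_of_nonneg (by linarith), abs_of_pos h']; ring
    · push_neg at h
      have hsa' : s ≤ -(a j) := by rwa [abs_of_neg h] at hsa
      rw [ht, if_neg (not_le.mpr h), abs_of_nonpos (by linarith), abs_of_neg h]; ring
  have hk := key t
  rw [habs] at hk
  have h2 : |t| = s := by by_cases h : 0 ≤ a j <;> simp [ht, h, abs_of_pos hs0]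
  have h3 : -(t*c) ≤ s * |c| := by
    calc -(t*c) ≤ |t*c| := neg_le_abs _
      _ = s * |c| := by rw [abs_mul, h2]
  have ht2 : t^2 = s^2 := by rw [← sq_abs, h2]
  nlinarith [hk, h3, ht2, mul_le_mul_of_nonneg_left hsl hs0.le, hs0]

lemma lasso_basic {d m : ℕ} {lam : ℝ} (hlam : 0 < lam) {D : Matrix (Fin d) (Fin m) ℝ}
    {x : Fin d → ℝ} {a : Fin m → ℝ} (hmin : IsLassoMin lam D x a) :
    norm2 (x - D.mulVec a) ≤ norm2 x ∧ norm1 a ≤ (norm2 x)^2/(2*lam) := by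
  have h := hmin 0
  rw [lassoObj, lassoObj, Matrix.mulVec_zero, sub_zero] at h
  have h0 : norm1 (0 : Fin m → ℝ) = 0 := by simp [norm1]
  rw [h0, mul_zero, add_zero] at h
  have hnr := norm2_nonneg (x - D.mulVec a)
  have hnx := norm2_nonneg x
  have hn1 := norm1_nonneg a
  constructor
  · nlinarith
  · rw [le_div_iff₀ (by linarith : (0:ℝ) < 2*lam)]
    nlinarith
  
lemma obj_pert {d m : ℕ} (lam : ℝ) (D Dt : Matrix (Fin d) (Fin m) ℝ)
    (x : Fin d → ℝ) (z : Fin m → ℝ) :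
    lassoObj lam D x z ≤ lassoObj lam Dt x z
      + (1/2)*(norm2 (x - D.mulVec z) + norm2 (x - Dt.mulVec z))
        * (norm12 (D - Dt) * norm1 z) := by
  set u := toE (x - D.mulVec z) with hu
  set w := toE (x - Dt.mulVec z) with hw
  have hd : ‖u - w‖ ≤ norm12 (D - Dt) * norm1 z := by
    have : u - w = -(toE ((D - Dt).mulVec z)) := by
      rw [hu, hw, Matrix.sub_mulVec, ← toE_sub, ← toE_neg]
      congr 1; ext r; simp
    rw [this, norm_neg]
    exact mulVec_norm_le _ _
  have h1 : ‖u‖ - ‖w‖ ≤ ‖u - w‖ := norm_sub_norm_le _ _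
  rw [lassoObj, lassoObj, norm2_eq (x - D.mulVec z), norm2_eq (x - Dt.mulVec z), ← hu, ← hw]
  nlinarith [norm_nonneg u, norm_nonneg w, norm_nonneg (u - w),
    mul_le_mul_of_nonneg_left (le_trans h1 hd)
      (by positivity : (0:ℝ) ≤ ‖u‖ + ‖w‖)]

lemma norm1_mid {m : ℕ} (a b : Fin m → ℝ) :
    norm1 ((1/2 : ℝ) • (a + b)) ≤ (1/2) * norm1 a + (1/2) * norm1 b := by
  rw [norm1, norm1, norm1, Finset.mul_sum, Finset.mul_sum, ← Finset.sum_add_distrib]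
  apply Finset.sum_le_sum
  intro i _
  have : ((1/2 : ℝ) • (a + b)) i = (1/2) * (a i + b i) := rfl
  rw [this]
  rw [abs_mul, abs_of_pos (by norm_num : (0:ℝ) < 1/2)]
  have := abs_add_le (a i) (b i)
  nlinarith [abs_nonneg (a i + b i)]

lemma strong_conv {d m : ℕ} {lam : ℝ} (hlam : 0 ≤ lam) (D : Matrix (Fin d) (Fin m) ℝ)
    (x : Fin d → ℝ) (a b : Fin m → ℝ) :
    lassoObj lam D x ((1/2 : ℝ) • (a + b))
      ≤ (1/2) * lassoObj lam D x a + (1/2) * lassoObj lam D x b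
        - (1/8) * ‖toE (D.mulVec (a - b))‖^2 := by
  set u := toE (x - D.mulVec a) with hu
  set w := toE (x - D.mulVec b) with hw
  have hm : toE (x - D.mulVec ((1/2 : ℝ) • (a + b))) = (1/2 : ℝ) • (u + w) := by
    have h : x - D.mulVec ((1/2 : ℝ) • (a + b))
        = (1/2 : ℝ) • ((x - D.mulVec a) + (x - D.mulVec b)) := by
      rw [Matrix.mulVec_smul, Matrix.mulVec_add]; module
    rw [h]; rfl
  have huw : u - w = -(toE (D.mulVec (a - b))) := by
    rw [hu, hw, ← toE_sub, ← toE_neg]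
    congr 1; rw [Matrix.mulVec_sub]; ext r; simp
  have hpar := parallelogram_law_with_norm ℝ u w
  have hn : ‖(1/2 : ℝ) • (u + w)‖^2 = (1/4) * ‖u + w‖^2 := by
    rw [norm_smul, Real.norm_eq_abs, mul_pow, sq_abs]; norm_num
  have hsub : ‖u - w‖ = ‖toE (D.mulVec (a - b))‖ := by rw [huw, norm_neg]
  have hmid := norm1_mid a b
  rw [lassoObj, lassoObj, lassoObj, norm2_eq, norm2_eq, norm2_eq, hm, ← hu, ← hw, hn]
  have hp2 : ‖u + w‖^2 = 2*(‖u‖^2 + ‖w‖^2) - ‖toE (D.mulVec (a-b))‖^2 := by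
    rw [← hsub]; nlinarith [hpar]
  nlinarith [mul_le_mul_of_nonneg_left hmid hlam]

set_option maxHeartbeats 2000000 in
lemma pert_bound {d m : ℕ} {lam : ℝ} (hlam : 0 < lam) {D Dt : Matrix (Fin d) (Fin m) ℝ}
    (hm : 0 < m) (hDt : IsDictionary Dt)
    (hclose : norm12 (D - Dt) ≤ lam) {x : Fin d → ℝ} {a at' : Fin m → ℝ}
    (ha : IsLassoMin lam D x a) (hat : IsLassoMin lam Dt x at') (j : Fin m) :
    |dot (_root_.col Dt j) (x - Dt.mulVec at') - dot (_root_.col D j) (x - D.mulVec a)|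
      ≤ (1 + norm2 x / lam) * norm2 x * norm12 (D - Dt)
        + Real.sqrt (2 * (3 * (norm2 x)^2 + 9 * norm2 x + 2) * (norm2 x)^2 * norm12 (D - Dt) / lam) := by
  set X := norm2 x with hX
  set ε := norm12 (D - Dt) with hε
  have hε0 : 0 ≤ ε := norm12_nonneg _ hm
  have hX0 : 0 ≤ X := norm2_nonneg x
  have hX2 : 0 ≤ X^2 := sq_nonneg _
  obtain ⟨hra, h1a⟩ := lasso_basic hlam ha
  obtain ⟨hrt, h1t⟩ := lasso_basic hlam hat
  rw [← hX] at hra h1a hrt h1t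
  have hn1a : 0 ≤ norm1 a := norm1_nonneg a
  have hn1t : 0 ≤ norm1 at' := norm1_nonneg at'
  -- ε·norm1 bounds
  have hea : ε * norm1 a ≤ X^2/2 := by
    calc ε * norm1 a ≤ lam * norm1 a := mul_le_mul_of_nonneg_right hclose hn1a
      _ ≤ lam * (X^2/(2*lam)) := mul_le_mul_of_nonneg_left h1a hlam.le
      _ = X^2/2 := by field_simp
  have het : ε * norm1 at' ≤ X^2/2 := by
    calc ε * norm1 at' ≤ lam * norm1 at' := mul_le_mul_of_nonneg_right hclose hn1t
      _ ≤ lam * (X^2/(2*lam)) := mul_le_mul_of_nonneg_left h1t hlam.le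
      _ = X^2/2 := by field_simp
  -- cross residual bounds
  have hcross : ∀ z : Fin m → ℝ, norm2 (x - D.mulVec z) ≤ norm2 (x - Dt.mulVec z) + ε * norm1 z := by
    intro z
    have hsplit : toE (x - D.mulVec z) = toE (x - Dt.mulVec z) + toE ((Dt - D).mulVec z) := by
      rw [← toE_add]; congr 1; rw [Matrix.sub_mulVec]; ext r; simp
    rw [norm2_eq, norm2_eq, hsplit]
    calc ‖toE (x - Dt.mulVec z) + toE ((Dt - D).mulVec z)‖
        ≤ ‖toE (x - Dt.mulVec z)‖ + ‖toE ((Dt - D).mulVec z)‖ := norm_add_le _ _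
      _ ≤ ‖toE (x - Dt.mulVec z)‖ + ε * norm1 z := by
          have := mulVec_norm_le (Dt - D) z
          rw [norm12_sub_symm] at this
          linarith
  have hcross' : ∀ z : Fin m → ℝ, norm2 (x - Dt.mulVec z) ≤ norm2 (x - D.mulVec z) + ε * norm1 z := by
    intro z
    have hsplit : toE (x - Dt.mulVec z) = toE (x - D.mulVec z) + toE ((D - Dt).mulVec z) := by
      rw [← toE_add]; congr 1; rw [Matrix.sub_mulVec]; ext r; simp
    rw [norm2_eq, norm2_eq, hsplit]
    calc ‖toE (x - D.mulVec z) + toE ((D - Dt).mulVec z)‖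
        ≤ ‖toE (x - D.mulVec z)‖ + ‖toE ((D - Dt).mulVec z)‖ := norm_add_le _ _
      _ ≤ ‖toE (x - D.mulVec z)‖ + ε * norm1 z := by
          have := mulVec_norm_le (D - Dt) z
          linarith
  have hDat : norm2 (x - D.mulVec at') ≤ X + X^2/2 := by
    have := hcross at'
    linarith
  have hDta : norm2 (x - Dt.mulVec a) ≤ X + X^2/2 := by
    have := hcross' a
    linarith
  -- strong convexity bound on S
  set S := ‖toE (D.mulVec (a - at'))‖ with hS
  have hS0 : 0 ≤ S := norm_nonneg _
  have hS2 : S^2 ≤ 4 * (lassoObj lam D x at' - lassoObj lam D x a) := by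
    have hsc := strong_conv hlam.le D x a at'
    have hfm := ha ((1/2 : ℝ) • (a + at'))
    linarith
  have hA := obj_pert lam D Dt x at'
  have hB := hat a
  have hC := obj_pert lam Dt D x a
  rw [norm12_sub_symm] at hC
  rw [← hε] at hA hC
  -- numeric bound on S^2
  have hnra : 0 ≤ norm2 (x - D.mulVec a) := norm2_nonneg _
  have hnrt : 0 ≤ norm2 (x - Dt.mulVec at') := norm2_nonneg _
  have hnDat : 0 ≤ norm2 (x - D.mulVec at') := norm2_nonneg _
  have hnDta : 0 ≤ norm2 (x - Dt.mulVec a) := norm2_nonneg _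
  have hP1 : (norm2 (x - D.mulVec at') + norm2 (x - Dt.mulVec at')) * (ε * norm1 at')
      ≤ (2*X + X^2/2) * (ε * (X^2/(2*lam))) :=
    mul_le_mul (by linarith) (mul_le_mul_of_nonneg_left h1t hε0)
      (mul_nonneg hε0 hn1t) (by nlinarith)
  have hP2 : (norm2 (x - Dt.mulVec a) + norm2 (x - D.mulVec a)) * (ε * norm1 a)
      ≤ (2*X + X^2/2) * (ε * (X^2/(2*lam))) :=
    mul_le_mul (by linarith) (mul_le_mul_of_nonneg_left h1a hε0)
      (mul_nonneg hε0 hn1a) (by nlinarith)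
  clear_value X ε S
  have hmid : S^2 ≤ 2*((2*X + X^2/2) * (ε * (X^2/(2*lam))))
      + 2*((2*X + X^2/2) * (ε * (X^2/(2*lam)))) := by linarith
  clear hA hB hC hcross hcross' ha hat hP1 hP2 hS2 hea het hnra hnrt hnDat hnDta hDat hDta
  set T := 2 * (3 * X^2 + 9 * X + 2) * X^2 * ε / lam with hT
  have hS2T : S^2 ≤ T := by
    clear * - hlam hε0 hX0 hX2 hmid hT
    have heq : 2*((2*X + X^2/2) * (ε * (X^2/(2*lam))))
        + 2*((2*X + X^2/2) * (ε * (X^2/(2*lam)))) = (4*X + X^2) * X^2 * ε / lam := by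
      field_simp; ring
    have hcmp : (4*X + X^2) * X^2 * ε / lam ≤ T := by
      rw [hT, div_le_div_iff_of_pos_right hlam]
      nlinarith [mul_nonneg (mul_nonneg hε0 hX2) hX0, mul_nonneg (mul_nonneg hε0 hX2) hX2,
        mul_nonneg hε0 hX2]
    rw [heq] at hmid
    linarith
  have hT0 : 0 ≤ T := le_trans (sq_nonneg S) hS2T
  have hSsqrt : S ≤ Real.sqrt T := by
    calc S = Real.sqrt (S^2) := (Real.sqrt_sq hS0).symm
      _ ≤ Real.sqrt T := Real.sqrt_le_sqrt hS2T
  -- decompose the inner product difference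
  set g := toE (_root_.col D j) with hg
  set gt := toE (_root_.col Dt j) with hgt
  set r := toE (x - D.mulVec a) with hr
  set rt := toE (x - Dt.mulVec at') with hrt2
  have hgt1 : ‖gt‖ = 1 := by rw [hgt, ← norm2_eq]; exact hDt j
  have hdec : dot (_root_.col Dt j) (x - Dt.mulVec at') - dot (_root_.col D j) (x - D.mulVec a)
      = inner ℝ (gt - g) r + inner ℝ gt (rt - r) := by
    rw [dot_eq, dot_eq, inner_sub_left, inner_sub_right (𝕜 := ℝ)]
    ring
  have hgdiff : ‖gt - g‖ ≤ ε := by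
    have e : gt - g = -(toE (_root_.col (D - Dt) j)) := by
      rw [hgt, hg]
      ext i
      simp [toE, _root_.col]
    rw [e, norm_neg, ← norm2_eq, hε]
    exact col_le_norm12 _ j
  have h1b : |inner ℝ (gt - g) r| ≤ ε * X := by
    calc |inner ℝ (gt - g) r| ≤ ‖gt - g‖ * ‖r‖ := abs_real_inner_le_norm _ _
      _ ≤ ε * X := by
          have hrX : ‖r‖ ≤ X := by rw [hr, ← norm2_eq]; try exact hra
          exact mul_le_mul hgdiff hrX (norm_nonneg _) hε0
  have hrtr : ‖rt - r‖ ≤ S + ε * (X^2/(2*lam)) := by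
    have e : rt - r = toE (D.mulVec (a - at')) + toE ((D - Dt).mulVec at') := by
      rw [hrt2, hr, ← toE_add, ← toE_sub]
      congr 1; rw [Matrix.mulVec_sub, Matrix.sub_mulVec]; ext i; simp
    rw [e]
    calc ‖toE (D.mulVec (a - at')) + toE ((D - Dt).mulVec at')‖
        ≤ ‖toE (D.mulVec (a - at'))‖ + ‖toE ((D - Dt).mulVec at')‖ := norm_add_le _ _
      _ ≤ S + ε * (X^2/(2*lam)) := by
          have h := mulVec_norm_le (D - Dt) at'
          rw [← hε] at h
          have h2 : ε * norm1 at' ≤ ε * (X^2/(2*lam)) := mul_le_mul_of_nonneg_left h1t hε0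
          rw [hS]
          clear * - h h2
          linarith
  have h2b : |inner ℝ gt (rt - r)| ≤ S + ε * (X^2/(2*lam)) := by
    calc |inner ℝ gt (rt - r)| ≤ ‖gt‖ * ‖rt - r‖ := abs_real_inner_le_norm _ _
      _ = ‖rt - r‖ := by rw [hgt1, one_mul]
      _ ≤ S + ε * (X^2/(2*lam)) := hrtr
  have hbudget : ε * X + ε * (X^2/(2*lam)) ≤ (1 + X/lam) * X * ε := by
    clear * - hε0 hX2 hlam
    have e : (1 + X/lam) * X * ε - (ε * X + ε * (X^2/(2*lam))) = ε * X^2 / (2*lam) := by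
      field_simp; ring
    have e2 : 0 ≤ ε * X^2 / (2*lam) := div_nonneg (mul_nonneg hε0 hX2) (by linarith)
    linarith
  calc |dot (_root_.col Dt j) (x - Dt.mulVec at') - dot (_root_.col D j) (x - D.mulVec a)|
      = |inner ℝ (gt - g) r + inner ℝ gt (rt - r)| := by rw [hdec]
    _ ≤ |inner ℝ (gt - g) r| + |inner ℝ gt (rt - r)| := abs_add_le _ _
    _ ≤ ε * X + (S + ε * (X^2/(2*lam))) := by
        clear * - h1b h2b
        linarith
    _ ≤ (1 + X/lam) * X * ε + Real.sqrt T := by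
        clear * - hbudget hSsqrt
        linarith

/-- Preservation of sparsity. -/
theorem preservation_of_sparsity {d m : ℕ} (lam : ℝ) (hlam : 0 < lam) (k : ℕ)
    (D Dt : Matrix (Fin d) (Fin m) ℝ) (hD : IsDictionary D) (hDt : IsDictionary Dt)
    (hclose : norm12 (D - Dt) ≤ lam)
    (x : Fin d → ℝ)
    (a at' : Fin m → ℝ) (ha : IsLassoMin lam D x a) (hat : IsLassoMin lam Dt x at')
    (hmargin : (1 + norm2 x / lam) * norm2 x * norm12 (D - Dt)
        + Real.sqrt (2 * (3 * (norm2 x)^2 + 9 * norm2 x + 2) * (norm2 x)^2 * norm12 (D - Dt) / lam)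
        < kMargin lam k D x a) :
    norm0 (a - at') ≤ k := by
  rcases Nat.eq_zero_or_pos m with hm0 | hm
  · subst hm0
    have he : {i : Fin 0 | (a - at') i ≠ 0} = ∅ := Set.eq_empty_of_isEmpty _
    show Set.ncard {i | (a - at') i ≠ 0} ≤ k
    rw [he]
    simp
  set B := (1 + norm2 x / lam) * norm2 x * norm12 (D - Dt)
      + Real.sqrt (2 * (3 * (norm2 x)^2 + 9 * norm2 x + 2) * (norm2 x)^2 * norm12 (D - Dt) / lam)
      with hB
  have hB0 : 0 ≤ B := by
    have h2 : 0 ≤ norm2 x / lam := div_nonneg (norm2_nonneg x) hlam.le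
    have h1 : 0 ≤ (1 + norm2 x / lam) * norm2 x * norm12 (D - Dt) :=
      mul_nonneg (mul_nonneg (by linarith) (norm2_nonneg x)) (norm12_nonneg _ hm)
    have h3 := Real.sqrt_nonneg
      (2 * (3 * (norm2 x)^2 + 9 * norm2 x + 2) * (norm2 x)^2 * norm12 (D - Dt) / lam)
    rw [hB]
    linarith
  obtain ⟨I0, -, hI0⟩ := Finset.exists_subset_card_eq (s := (Finset.univ : Finset (Fin m))) (n := m - k)
    (by simpa using Nat.sub_le m k)
  haveI hne : Nonempty {I : Finset (Fin m) // I.card = m - k} := ⟨⟨I0, hI0⟩⟩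
  obtain ⟨⟨I, hIcard⟩, hI⟩ := exists_lt_of_lt_ciSup
    (show B < ⨆ I : {I : Finset (Fin m) // I.card = m - k},
      ⨅ j : {j : Fin m // j ∈ I.1}, (lam - |dot (_root_.col D j.1) (x - D.mulVec a)|)
      from hmargin)
  have hbdd : BddBelow (Set.range fun j : {j : Fin m // j ∈ I} =>
      lam - |dot (_root_.col D j.1) (x - D.mulVec a)|) := by
    refine ⟨0, ?_⟩
    rintro y ⟨j, rfl⟩
    have := (lasso_kkt hlam hD ha j.1).1
    simp only
    linarith
  have hperj : ∀ j, j ∈ I → B < lam - |dot (_root_.col D j) (x - D.mulVec a)| :=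
    fun j hj => lt_of_lt_of_le hI (ciInf_le hbdd ⟨j, hj⟩)
  have hzero : ∀ j ∈ I, a j = at' j := by
    intro j hj
    have hkey := hperj j hj
    have haj : a j = 0 := by
      by_contra h
      have heq := (lasso_kkt hlam hD ha j).2 h
      rw [heq] at hkey
      simp only [sub_self] at hkey
      linarith
    have hatj : at' j = 0 := by
      by_contra h
      have heq := (lasso_kkt hlam hDt hat j).2 h
      have hp := pert_bound hlam hm hDt hclose ha hat j
      have htri := abs_sub_abs_le_abs_sub (dot (_root_.col Dt j) (x - Dt.mulVec at'))
        (dot (_root_.col D j) (x - D.mulVec a))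
      rw [heq] at htri
      rw [hB] at hkey
      linarith
    rw [haj, hatj]
  have hsub : {i | (a - at') i ≠ 0} ⊆ ↑(Finset.univ \ I) := by
    intro i hi
    simp only [Finset.coe_sdiff, Finset.coe_univ, Set.mem_diff, Set.mem_univ, true_and,
      Finset.mem_coe]
    intro hiI
    exact hi (by simp [hzero i hiI])
  have hcount : Set.ncard {i | (a - at') i ≠ 0} ≤ (Finset.univ \ I).card := by
    have := Set.ncard_le_ncard hsub (Finset.finite_toSet _)
    rwa [Set.ncard_coe_finset] at this
  have hcard : (Finset.univ \ I).card = m - (m - k) := by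
    rw [Finset.card_sdiff_of_subset (Finset.subset_univ I), Finset.card_univ, hIcard, Fintype.card_fin]
  show Set.ncard {i | (a - at') i ≠ 0} ≤ k
  rw [hcard] at hcount
  omega
end
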